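/- Let G be a finite group and suppose {χ_α} is a set of pairwise orthogonal characters of G, constant on the parts of a partition {K_β} of G with |{χ_α}| = |{K_β}| and {1} ∈ {K_β}. Then every irreducible character of G is a constituent of exactly one χ_α. -/

import Mathlib

open Module LinearMap Polynomial

noncomputable section

lemma trace_conj_aux {M : Type} [AddCommGroup M] [Module ℂ M] [FiniteDimensional ℂ M]
    (f h : Module.End ℂ M) (hfh : f * h = 1) (n : ℕ) (hn : 0 < n) (hfn : f ^ n = 1) :
    (starRingEnd ℂ) (LinearMap.trace ℂ M f) = LinearMap.trace ℂ M h := by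
  have hhf : h * f = 1 := mul_eq_one_comm.mp hfh
  have hsq : Squarefree (X ^ n - 1 : ℂ[X]) :=
    (Polynomial.X_pow_sub_one_separable_iff.mpr
      (by exact_mod_cast (Nat.cast_ne_zero (R := ℂ)).mpr hn.ne')).squarefree
  have hss : f.IsSemisimple :=
    Module.End.isSemisimple_of_squarefree_aeval_eq_zero hsq
      (by simp [map_sub, map_pow, hfn, Polynomial.aeval_X])
  have htop : ⨆ μ : ℂ, f.eigenspace μ = ⊤ := by
    have h1 := Module.End.iSup_maxGenEigenspace_eq_top f
    simp_rw [hss.isFinitelySemisimple.maxGenEigenspace_eq_eigenspace] at h1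
    exact h1
  have hindep := f.eigenspaces_iSupIndep
  have hint : DirectSum.IsInternal f.eigenspace :=
    (DirectSum.isInternal_submodule_iff_iSupIndep_and_iSup_eq_top _).mpr ⟨hindep, htop⟩
  have hfin : {μ : ℂ | f.eigenspace μ ≠ ⊥}.Finite :=
    WellFoundedGT.finite_ne_bot_of_iSupIndep hindep
  have hmapf : ∀ μ : ℂ, Set.MapsTo f (f.eigenspace μ) (f.eigenspace μ) := by
    intro μ x hx
    simp only [SetLike.mem_coe, Module.End.mem_eigenspace_iff] at hx ⊢
    rw [hx, map_smul, hx]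
  have key : ∀ μ : ℂ, ∀ x, x ∈ f.eigenspace μ → x = μ • h x := by
    intro μ x hx
    have hx' := Module.End.mem_eigenspace_iff.mp hx
    calc x = h (f x) := by rw [← Module.End.mul_apply, hhf]; rfl
    _ = μ • h x := by rw [hx', map_smul]
  have hmaph : ∀ μ : ℂ, Set.MapsTo h (f.eigenspace μ) (f.eigenspace μ) := by
    intro μ x hx
    simp only [SetLike.mem_coe] at hx ⊢
    rw [Module.End.mem_eigenspace_iff]
    calc f (h x) = x := by rw [← Module.End.mul_apply, hfh]; rfl
    _ = μ • h x := key μ x hx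
  rw [LinearMap.trace_eq_sum_trace_restrict' hint hfin hmapf,
    LinearMap.trace_eq_sum_trace_restrict' hint hfin hmaph, map_sum]
  refine Finset.sum_congr rfl fun μ hμ => ?_
  rw [Set.Finite.mem_toFinset] at hμ
  obtain ⟨x, hx, hx0⟩ := Submodule.exists_mem_ne_zero_of_ne_bot hμ
  have hxe : f x = μ • x := Module.End.mem_eigenspace_iff.mp hx
  have hpow : ∀ m : ℕ, (f ^ m) x = μ ^ m • x := by
    intro m
    induction m with
    | zero => simp
    | succ l ih =>
      rw [pow_succ', Module.End.mul_apply, ih, map_smul, hxe, smul_smul, ← pow_succ]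
  have hμn : μ ^ n = 1 := by
    have h1 : x = μ ^ n • x := by rw [← hpow, hfn, Module.End.one_apply]
    have h2 : (μ ^ n - 1) • x = 0 := by rw [sub_smul, one_smul, ← h1, sub_self]
    rcases smul_eq_zero.mp h2 with h' | h'
    · exact sub_eq_zero.mp h'
    · exact absurd h' hx0
  have hnorm : ‖μ‖ = 1 := Complex.norm_eq_one_of_pow_eq_one hμn hn.ne'
  have hμ0 : μ ≠ 0 := by rintro rfl; simp at hnorm
  have hconjμ : (starRingEnd ℂ) μ = μ⁻¹ := (Complex.inv_eq_conj hnorm).symm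
  have hrf : f.restrict (hmapf μ) = μ • LinearMap.id := by
    ext ⟨y, hy⟩
    simp [LinearMap.restrict_apply, LinearMap.restrict_coe_apply, Module.End.mem_eigenspace_iff.mp hy]
    exact Module.End.mem_eigenspace_iff.mp hy
  have hrh : h.restrict (hmaph μ) = μ⁻¹ • LinearMap.id := by
    ext ⟨y, hy⟩
    have : y = μ • h y := key μ y hy
    simp only [LinearMap.restrict_apply, LinearMap.smul_apply, LinearMap.id_coe, id_eq,
      SetLike.val_smul]
    rw [eq_inv_smul_iff₀ hμ0]
    exact this.symm
  have t1 : ∀ c : ℂ, LinearMap.trace ℂ (f.eigenspace μ)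
      (c • (LinearMap.id : Module.End ℂ (f.eigenspace μ)))
      = c * (finrank ℂ (f.eigenspace μ) : ℂ) := fun c => by
    rw [map_smul, LinearMap.trace_id, smul_eq_mul]
  rw [hrf, hrh, t1, t1, map_mul, hconjμ, map_natCast]

open CategoryTheory FDRep Representation

variable {G : Type} [Group G] [Fintype G]

lemma char_inv (V : FDRep ℂ G) (g : G) :
    (starRingEnd ℂ) (V.character g) = V.character g⁻¹ :=
  trace_conj_aux (V.ρ g) (V.ρ g⁻¹)
    (by rw [← map_mul, mul_inv_cancel, map_one])
    (Fintype.card G) Fintype.card_pos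
    (by rw [← map_pow, pow_card_eq_one, map_one])

lemma sum_char (A B : FDRep ℂ G) :
    ∑ g : G, A.character g * (starRingEnd ℂ) (B.character g)
      = (Fintype.card G : ℂ) * (finrank ℂ (B ⟶ A) : ℂ) := by
  letI : Invertible (Fintype.card G : ℂ) :=
    invertibleOfNonzero (Nat.cast_ne_zero.mpr Fintype.card_ne_zero)
  have h1 : ∀ g : G, A.character g * (starRingEnd ℂ) (B.character g)
      = (FDRep.of (linHom B.ρ A.ρ)).character g := by
    intro g
    rw [char_inv, FDRep.char_linHom, mul_comm]
  simp_rw [h1]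
  have h2 := FDRep.average_char_eq_finrank_invariants (FDRep.of (linHom B.ρ A.ρ))
  rw [show (FDRep.of (linHom B.ρ A.ρ)).ρ = linHom B.ρ A.ρ from FDRep.of_ρ' _] at h2
  have h3 : finrank ℂ ((linHom B.ρ A.ρ).invariants) = finrank ℂ (B ⟶ A) :=
    (Representation.linHom.invariantsEquivFDRepHom (k := ℂ) (G := G) B A).finrank_eq
  calc ∑ g : G, (FDRep.of (linHom B.ρ A.ρ)).character g
      = (Fintype.card G : ℂ) * (⅟(Fintype.card G : ℂ)
        • ∑ g : G, (FDRep.of (linHom B.ρ A.ρ)).character g) := by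
        rw [smul_eq_mul, ← mul_assoc, mul_invOf_self, one_mul]
  _ = (Fintype.card G : ℂ) * (finrank ℂ (B ⟶ A) : ℂ) := by
      rw [Nat.card_eq_fintype_card] at h2
      rw [smul_eq_mul, invOf_eq_inv, h2]; congr 1; exact_mod_cast h3

lemma exists_hom_of_sum_ne_zero {A B : FDRep ℂ G}
    (hAB : ∑ g : G, A.character g * (starRingEnd ℂ) (B.character g) ≠ 0) :
    ∃ φ : B ⟶ A, φ ≠ 0 := by
  rw [sum_char] at hAB
  have h1 : finrank ℂ (B ⟶ A) ≠ 0 := by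
    intro h; rw [h] at hAB; simp at hAB
  have h2 : Nontrivial (B ⟶ A) := by
    rw [← not_subsingleton_iff_nontrivial]
    intro hs
    exact h1 (Module.finrank_zero_iff.mpr hs)
  exact exists_ne 0

lemma hom_eq_zero_of_sum_eq_zero {A B : FDRep ℂ G}
    (hAB : ∑ g : G, A.character g * (starRingEnd ℂ) (B.character g) = 0) (φ : B ⟶ A) :
    φ = 0 := by
  rw [sum_char] at hAB
  rcases mul_eq_zero.mp hAB with h | h
  · exact absurd h (Nat.cast_ne_zero.mpr Fintype.card_ne_zero)
  · have hs : Subsingleton (B ⟶ A) := Module.finrank_zero_iff.mp (Nat.cast_eq_zero.mp h)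
    exact Subsingleton.elim _ _


/-- Corollary to Theorems 1 and 2: in a supercharacter theory of a
finite group `G` — a set `Ch` of pairwise orthogonal nonzero characters, constant on
the parts of a partition `K` of `G` with `|Ch| = |K|` and `{1} ∈ K` — every
irreducible character of `G` is a constituent of exactly one supercharacter. -/
theorem stmt14 {G : Type} [Group G] [Fintype G]
    (Ch : Finset (G → ℂ)) (K : Finset (Set G))
    (hrep : ∀ χ ∈ Ch, ∃ W : FDRep ℂ G, χ = W.character)
    (hnonzero : ∀ χ ∈ Ch, χ ≠ 0)
    (hpart : Setoid.IsPartition (↑K : Set (Set G)))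
    (hone : {(1 : G)} ∈ K)
    (hconst : ∀ χ ∈ Ch, ∀ P ∈ K, ∀ x ∈ P, ∀ y ∈ P, χ x = χ y)
    (hortho : ∀ χ ∈ Ch, ∀ χ' ∈ Ch, χ ≠ χ' →
      ∑ g : G, χ g * (starRingEnd ℂ) (χ' g) = 0)
    (hcard : Ch.card = K.card)
    (V : FDRep ℂ G) (hV : CategoryTheory.Simple V) :
    ∃! χ : G → ℂ, χ ∈ Ch ∧
      ∑ g : G, χ g * (starRingEnd ℂ) (V.character g) ≠ 0 := by
  classical
  haveI := hV
  -- the sesquilinear pairing, linear in the first argument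
  let L : (G → ℂ) → (G → ℂ) →ₗ[ℂ] ℂ := fun w =>
    { toFun := fun f => ∑ g : G, f g * (starRingEnd ℂ) (w g)
      map_add' := by intro a b; simp [add_mul, Finset.sum_add_distrib]
      map_smul' := by intro c a; simp [Finset.mul_sum, mul_assoc] }
  -- positivity of the pairing
  have hBself : ∀ f : G → ℂ, f ≠ 0 → (∑ g : G, f g * (starRingEnd ℂ) (f g)) ≠ 0 := by
    intro f hf h0
    have h1 : ∑ g : G, f g * (starRingEnd ℂ) (f g)
        = ((∑ g : G, Complex.normSq (f g) : ℝ) : ℂ) := by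
      push_cast
      exact Finset.sum_congr rfl fun g _ => (Complex.mul_conj (f g))
    rw [h1] at h0
    have h2 : ∑ g : G, Complex.normSq (f g) = 0 := by exact_mod_cast h0
    have h3 : ∀ g ∈ Finset.univ, Complex.normSq (f g) = 0 :=
      (Finset.sum_eq_zero_iff_of_nonneg (fun g _ => Complex.normSq_nonneg _)).mp h2
    apply hf
    funext g
    exact Complex.normSq_eq_zero.mp (h3 g (Finset.mem_univ g))
  -- the partition data
  let pt : G → Set G := fun x => (hpart.2 x).choose
  have hpt : ∀ x : G, (pt x ∈ K ∧ x ∈ pt x) ∧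
      ∀ Q : Set G, Q ∈ K ∧ x ∈ Q → Q = pt x := by
    intro x
    obtain ⟨h1, h2⟩ := (hpart.2 x).choose_spec
    exact ⟨⟨Finset.mem_coe.mp h1.1, h1.2⟩, fun Q hQ => h2 Q ⟨Finset.mem_coe.mpr hQ.1, hQ.2⟩⟩
  have hpt_eq : ∀ (x : G) (P : Set G), P ∈ K → x ∈ P → pt x = P :=
    fun x P hP hx => ((hpt x).2 P ⟨hP, hx⟩).symm
  -- the space of functions constant on parts
  let S : Submodule ℂ (G → ℂ) :=
    { carrier := {f | ∀ P ∈ K, ∀ x ∈ P, ∀ y ∈ P, f x = f y}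
      add_mem' := fun hf hg P hP x hx y hy => by
        simp only [Pi.add_apply, hf P hP x hx y hy, hg P hP x hx y hy]
      zero_mem' := fun P hP x hx y hy => rfl
      smul_mem' := fun c f hf P hP x hx y hy => by
        simp only [Pi.smul_apply, hf P hP x hx y hy] }
  have hSmem : ∀ f : G → ℂ, f ∈ S ↔ ∀ P ∈ K, ∀ x ∈ P, ∀ y ∈ P, f x = f y := fun f => Iff.rfl
  -- the parametrization of S by K
  let Φ : (↥K → ℂ) →ₗ[ℂ] (G → ℂ) :=
    { toFun := fun c x => c ⟨pt x, (hpt x).1.1⟩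
      map_add' := fun _ _ => rfl
      map_smul' := fun _ _ => rfl }
  have hne : ∀ P : ↥K, ∃ x : G, x ∈ (P : Set G) := by
    rintro ⟨P, hP⟩
    have : P ≠ ∅ := by
      intro h; exact hpart.1 (by rw [← h]; exact Finset.mem_coe.mpr hP)
    exact Set.nonempty_iff_ne_empty.mpr this
  let rep : ↥K → G := fun P => (hne P).choose
  have hrep_mem : ∀ P : ↥K, rep P ∈ (P : Set G) := fun P => (hne P).choose_spec
  have hΦinj : Function.Injective Φ := by
    intro c d hcd
    funext P
    have h1 : pt (rep P) = (P : Set G) := hpt_eq (rep P) P P.2 (hrep_mem P)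
    have h2 := congrFun hcd (rep P)
    simpa only [Φ, LinearMap.coe_mk, AddHom.coe_mk, Subtype.ext_iff, h1] using h2
  have hΦrange : LinearMap.range Φ = S := by
    apply le_antisymm
    · rintro f ⟨c, rfl⟩
      intro P hP x hx y hy
      have : pt x = pt y := by rw [hpt_eq x P hP hx, hpt_eq y P hP hy]
      simp only [Φ, LinearMap.coe_mk, AddHom.coe_mk]
      congr 1
      exact Subtype.ext this
    · intro f hf
      refine ⟨fun P => f (rep P), ?_⟩
      funext x
      exact hf (pt x) (hpt x).1.1 (rep ⟨pt x, (hpt x).1.1⟩)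
        (hrep_mem ⟨pt x, (hpt x).1.1⟩) x (hpt x).1.2
  have hfinrankS : finrank ℂ S = K.card := by
    rw [← hΦrange, LinearMap.finrank_range_of_inj hΦinj, Module.finrank_pi, Fintype.card_coe]
  -- linear independence of Ch
  have hli : LinearIndependent ℂ ((↑) : ↥Ch → (G → ℂ)) := by
    rw [linearIndependent_iff']
    intro s c hsum i hi
    have h0 : (L (↑i)) (∑ j ∈ s, c j • (j : G → ℂ)) = 0 := by rw [hsum]; simp
    rw [map_sum] at h0
    simp only [map_smul, smul_eq_mul] at h0
    rw [Finset.sum_eq_single i (fun j _ hji => by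
      have hne' : (j : G → ℂ) ≠ (i : G → ℂ) := fun h => hji (Subtype.ext h)
      rw [show (L (↑i)) (↑j) = 0 from hortho _ j.2 _ i.2 hne', mul_zero])
      (fun h => absurd hi h)] at h0
    rcases mul_eq_zero.mp h0 with h | h
    · exact h
    · exact absurd h (hBself _ (hnonzero _ i.2))
  have hCh_sub : (↑Ch : Set (G → ℂ)) ⊆ S := fun χ hχ =>
    hconst χ (Finset.mem_coe.mp hχ) 
  have hspan : Submodule.span ℂ (↑Ch : Set (G → ℂ)) = S := by
    apply Submodule.eq_of_le_of_finrank_le (Submodule.span_le.mpr hCh_sub)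
    rw [hfinrankS, finrank_span_finset_eq_card hli, hcard]
  -- δ at 1 lies in S
  let δ1 : G → ℂ := fun x => if x = 1 then 1 else 0
  have hδ : δ1 ∈ S := by
    intro P hP x hx y hy
    by_cases h1P : (1 : G) ∈ P
    · have : P = {1} :=
        (hpt_eq 1 P hP h1P).symm.trans (hpt_eq 1 {1} hone rfl)
      subst this
      simp only [Set.mem_singleton_iff] at hx hy
      rw [hx, hy]
    · have hx1 : x ≠ 1 := fun h => h1P (h ▸ hx)
      have hy1 : y ≠ 1 := fun h => h1P (h ▸ hy)
      simp only [δ1, if_neg hx1, if_neg hy1]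
  -- existence
  have hex : ∃ χ ∈ Ch, ∑ g : G, χ g * (starRingEnd ℂ) (V.character g) ≠ 0 := by
    by_contra hno
    push_neg at hno
    have hker : Submodule.span ℂ (↑Ch : Set (G → ℂ)) ≤ LinearMap.ker (L V.character) :=
      Submodule.span_le.mpr fun χ hχ => LinearMap.mem_ker.mpr (hno χ (Finset.mem_coe.mp hχ))
    have hδker : (L V.character) δ1 = 0 :=
      LinearMap.mem_ker.mp (hker (hspan ▸ hδ))
    have hδval : (L V.character) δ1 = (starRingEnd ℂ) (V.character 1) := by
      simp only [L, LinearMap.coe_mk, AddHom.coe_mk, δ1]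
      rw [Finset.sum_eq_single 1 (fun g _ hg => by rw [if_neg hg, zero_mul])
        (fun h => absurd (Finset.mem_univ 1) h)]
      rw [if_pos rfl, one_mul]
    rw [hδval, FDRep.char_one] at hδker
    have hfr : finrank ℂ V ≠ 0 := by
      intro h0
      haveI hfin : Module.Finite ℂ ↑V.V.obj := inferInstanceAs (FiniteDimensional ℂ V)
      haveI hsub : Subsingleton ↑V.V.obj := Module.finrank_zero_iff.mp h0
      refine CategoryTheory.id_nonzero V ?_
      apply Action.hom_ext
      ext v
      exact Subsingleton.elim (α := ↑V.V.obj) _ _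
    apply hfr
    exact_mod_cast (by simpa using hδker : ((finrank ℂ V : ℂ)) = 0)
  -- uniqueness
  obtain ⟨χ₀, hχ₀Ch, hχ₀ne⟩ := hex
  refine ⟨χ₀, ⟨hχ₀Ch, hχ₀ne⟩, ?_⟩
  rintro χ₁ ⟨hχ₁Ch, hχ₁ne⟩
  by_contra hne'
  obtain ⟨W₀, hW₀⟩ := hrep χ₀ hχ₀Ch
  obtain ⟨W₁, hW₁⟩ := hrep χ₁ hχ₁Ch
  subst hW₀; subst hW₁
  -- nonzero hom p : W₀ ⟶ V
  have hp : ∑ g : G, V.character g * (starRingEnd ℂ) (W₀.character g) ≠ 0 := by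
    have hconj : ∑ g : G, V.character g * (starRingEnd ℂ) (W₀.character g)
        = (starRingEnd ℂ) (∑ g : G, W₀.character g * (starRingEnd ℂ) (V.character g)) := by
      rw [map_sum]
      exact Finset.sum_congr rfl fun g _ => by
        rw [map_mul, Complex.conj_conj, mul_comm]
    rw [hconj]
    exact (map_ne_zero (starRingEnd ℂ)).mpr hχ₀ne
  obtain ⟨p, hp0⟩ := exists_hom_of_sum_ne_zero hp
  obtain ⟨f', hf'0⟩ := exists_hom_of_sum_ne_zero hχ₁ne
  haveI : CategoryTheory.Mono f' := CategoryTheory.mono_of_nonzero_from_simple hf'0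
  have hsub : p ≫ f' = 0 :=
    hom_eq_zero_of_sum_eq_zero (hortho _ hχ₁Ch _ hχ₀Ch hne') (p ≫ f')
  exact hp0 (CategoryTheory.Limits.zero_of_comp_mono f' hsub)

end
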